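/- If x is the unique S-valued solution of the integral equation x(t) = x₀(t) + ∫₀ᵗ exp(α₁ s - α₂ t) f(t,s,x(s)) ds + ∫ₜ^∞ exp(-β s + γ t) g(t,s,x(s)) ds, then x is differentiable on [0,∞) and its derivative is bounded: sup_{t ≥ 0} |ẋ(t)| < ∞. -/

import Mathlib

set_option maxHeartbeats 1600000

open Real MeasureTheory intervalIntegral Set Filter Topology

lemma abs_min_sub_min_le_abs' (a b c : ℝ) : |min a c - min b c| ≤ |a - b| := by
  have h := abs_max_sub_max_le_abs (-a) (-b) (-c)
  rw [max_neg_neg, max_neg_neg, show -(min a c) - -(min b c) = -(min a c - min b c) by ring,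
    show (-a) - (-b) = -(a-b) by ring, abs_neg, abs_neg] at h
  exact h

lemma tendsto_diffquot' {E : Type*} [NormedAddCommGroup E] [NormedSpace ℝ E]
    {h : ℝ → E} {d : E} {a : ℝ} (hd : HasDerivAt h d a) :
    Tendsto (fun k : ℕ => ((k:ℝ)+1) • (h (a + ((k:ℝ)+1)⁻¹) - h a)) atTop (𝓝 d) := by
  rw [hasDerivAt_iff_tendsto_slope] at hd
  have hpos : ∀ k : ℕ, (0:ℝ) < ((k:ℝ)+1)⁻¹ := fun k => by positivity
  have hu : Tendsto (fun k : ℕ => a + ((k:ℝ)+1)⁻¹) atTop (𝓝[≠] a) := by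
    rw [tendsto_nhdsWithin_iff]
    constructor
    · have h0 : Tendsto (fun k : ℕ => ((k:ℝ)+1)⁻¹) atTop (𝓝 0) := by
        simpa [one_div] using tendsto_one_div_add_atTop_nhds_zero_nat (𝕜 := ℝ)
      simpa using tendsto_const_nhds.add h0
    · exact Filter.Eventually.of_forall fun k => by
        simp only [Set.mem_compl_iff, Set.mem_singleton_iff]
        intro hcontra
        nlinarith [hpos k, congrArg (fun z => z - a) hcontra]
  have := hd.comp hu
  refine this.congr fun k => ?_
  show slope h a (a + ((k:ℝ)+1)⁻¹) = ((k:ℝ)+1) • (h (a + ((k:ℝ)+1)⁻¹) - h a)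
  rw [slope_def_module, add_sub_cancel_left, inv_inv]

/-- slope lemma for the boundary term `t ↦ ∫ s in t₀..t, φ t s`. -/
lemma boundary_hasDerivWithinAt {E : Type*} [NormedAddCommGroup E] [NormedSpace ℝ E]
    [CompleteSpace E]
    (φ : ℝ → ℝ → E) (t₀ : ℝ) (c : E)
    (hInt : ∀ t, 0 ≤ t → IntervalIntegrable (φ t) MeasureTheory.volume t₀ t)
    (hcont : ∀ ε > (0:ℝ), ∃ δ > (0:ℝ), ∀ t s : ℝ, 0 ≤ t → |t - t₀| < δ → s ∈ Set.uIcc t₀ t →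
      ‖φ t s - c‖ ≤ ε) :
    HasDerivWithinAt (fun t => ∫ s in t₀..t, φ t s) c (Set.Ici 0) t₀ := by
  rw [hasDerivWithinAt_iff_tendsto_slope]
  rw [Metric.tendsto_nhdsWithin_nhds]
  intro ε hε
  obtain ⟨δ, hδ, hδ'⟩ := hcont (ε/2) (by linarith)
  refine ⟨δ, hδ, fun t ht hdist => ?_⟩
  obtain ⟨ht0, htne⟩ : t ∈ Set.Ici (0:ℝ) ∧ t ≠ t₀ := ⟨ht.1, by simpa using ht.2⟩
  have htabs : |t - t₀| < δ := by rwa [Real.dist_eq] at hdist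
  have hti : IntervalIntegrable (φ t) MeasureTheory.volume t₀ t := hInt t ht0
  have key : ‖(∫ s in t₀..t, φ t s) - (t - t₀) • c‖ ≤ (ε/2) * |t - t₀| := by
    have heq : (∫ s in t₀..t, φ t s) - (t - t₀) • c = ∫ s in t₀..t, (φ t s - c) := by
      rw [intervalIntegral.integral_sub hti intervalIntegrable_const,
        intervalIntegral.integral_const]
    rw [heq]
    have := intervalIntegral.norm_integral_le_of_norm_le_const
      (f := fun s => φ t s - c) (a := t₀) (b := t) (C := ε/2) ?_
    · linarith [this]
    · intro s hs
      exact hδ' t s ht0 htabs (Set.uIoc_subset_uIcc hs)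
  have hslope : slope (fun t => ∫ s in t₀..t, φ t s) t₀ t
      = (t - t₀)⁻¹ • ((∫ s in t₀..t, φ t s) - (t - t₀) • c) + c := by
    rw [slope_def_module, intervalIntegral.integral_same, sub_zero, smul_sub, smul_smul,
      inv_mul_cancel₀ (sub_ne_zero.2 htne), one_smul]
    abel
  rw [hslope, dist_eq_norm]
  have h2 : ‖(t - t₀)⁻¹ • ((∫ s in t₀..t, φ t s) - (t - t₀) • c)‖ ≤ ε/2 := by
    rw [norm_smul, norm_inv, Real.norm_eq_abs]
    calc |t - t₀|⁻¹ * ‖(∫ s in t₀..t, φ t s) - (t - t₀) • c‖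
        ≤ |t - t₀|⁻¹ * ((ε/2) * |t - t₀|) := by
          apply mul_le_mul_of_nonneg_left key (by positivity)
      _ ≤ ε/2 := by
          rcases eq_or_ne (|t - t₀|) 0 with h0 | h0
          · rw [h0]; simp; linarith
          · rw [mul_comm (ε/2), ← mul_assoc, inv_mul_cancel₀ h0, one_mul]
  calc ‖(t - t₀)⁻¹ • ((∫ s in t₀..t, φ t s) - (t - t₀) • c) + c - c‖
      = ‖(t - t₀)⁻¹ • ((∫ s in t₀..t, φ t s) - (t - t₀) • c)‖ := by rw [add_sub_cancel_right]
    _ ≤ ε/2 := h2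
    _ < ε := by linarith

lemma expint_bound (α₁ α₂ t : ℝ) (hα₁ : α₁ ≠ 0) (hα₂ : 0 ≤ α₂) (hα : α₁ ≤ α₂) (ht : 0 ≤ t) :
    0 ≤ (Real.exp (α₁*t) - 1)/α₁ ∧
      Real.exp (-α₂*t) * ((Real.exp (α₁*t) - 1)/α₁) ≤ 1/|α₁| := by
  have hb : Real.exp (-α₂*t) ≤ 1 := Real.exp_le_one_iff.2 (by nlinarith)
  have hb0 : 0 < Real.exp (-α₂*t) := Real.exp_pos _
  have h0 : 0 < Real.exp (α₁*t) := Real.exp_pos _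
  rcases lt_or_gt_of_ne hα₁ with hneg | hpos
  · have h1 : Real.exp (α₁*t) ≤ 1 := Real.exp_le_one_iff.2 (by nlinarith)
    rw [abs_of_neg hneg]
    have hrw : (Real.exp (α₁*t) - 1)/α₁ = (1 - Real.exp (α₁*t))/(-α₁) := by
      rw [div_eq_div_iff hα₁ (by linarith : -α₁ ≠ 0)]
      ring
    rw [hrw]
    constructor
    · apply div_nonneg (by linarith) (by linarith)
    · have key : Real.exp (-α₂*t) * (1 - Real.exp (α₁*t)) ≤ 1 := by nlinarith
      rw [← mul_div_assoc, div_le_div_iff₀ (by linarith) (by linarith), one_mul]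
      nlinarith [key, hneg]
  · have hcomb : Real.exp (-α₂*t) * Real.exp (α₁*t) ≤ 1 := by
      rw [← Real.exp_add]
      apply Real.exp_le_one_iff.2
      nlinarith
    rw [abs_of_pos hpos]
    constructor
    · apply div_nonneg _ (le_of_lt hpos)
      nlinarith [Real.add_one_le_exp (α₁ * t)]
    · have key : Real.exp (-α₂*t) * (Real.exp (α₁*t) - 1) ≤ 1 := by nlinarith [hcomb]
      rw [← mul_div_assoc, div_le_div_iff₀ hpos hpos, one_mul]
      nlinarith [key, hpos]

lemma integral_exp_scaled (β c : ℝ) (hβ : 0 < β) :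
    ∫ s in Set.Ioi c, Real.exp (-β * s) = Real.exp (-β * c)/β := by
  have hderiv : ∀ s ∈ Set.Ici c, HasDerivAt (fun u => -Real.exp (-β * u)/β)
      (Real.exp (-β * s)) s := by
    intro s _
    have h1 : HasDerivAt (fun u : ℝ => -β * u) (-β) s := by
      simpa using (hasDerivAt_id s).const_mul (-β)
    have h2 := h1.exp
    have h3 := (h2.neg).div_const β
    refine h3.congr_deriv ?_
    field_simp
  have hint : IntegrableOn (fun s => Real.exp (-β * s)) (Set.Ioi c) volume :=
    exp_neg_integrableOn_Ioi c hβ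
  have htend : Tendsto (fun u => -Real.exp (-β * u)/β) atTop (𝓝 0) := by
    have : Tendsto (fun u : ℝ => -β * u) atTop atBot :=
      Tendsto.const_mul_atTop_of_neg (by linarith) tendsto_id
    have hexp : Tendsto (fun u : ℝ => Real.exp (-β * u)) atTop (𝓝 0) :=
      Real.tendsto_exp_atBot.comp this
    have := (hexp.neg).div_const β
    simpa using this
  have := MeasureTheory.integral_Ioi_of_hasDerivAt_of_tendsto'
    (f := fun u => -Real.exp (-β * u)/β) (f' := fun s => Real.exp (-β * s)) (a := c)
    hderiv hint htend
  rw [this]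
  field_simp
  ring

lemma stepA_core {n : ℕ} (φ : ℝ → ℝ → Fin n → ℝ) (F' : ℝ → Fin n → ℝ) (t₀ : ℝ) (bound : ℝ → ℝ)
    (hmeas : ∀ t : ℝ, AEStronglyMeasurable (φ t) (volume.restrict (Set.uIoc 0 t₀)))
    (hint : IntervalIntegrable (φ t₀) volume 0 t₀)
    (hmeas' : AEStronglyMeasurable F' (volume.restrict (Set.uIoc 0 t₀)))
    (hlip : ∀ᵐ s ∂(volume : Measure ℝ), s ∈ Set.uIoc (0:ℝ) t₀ →
      LipschitzOnWith (Real.nnabs (bound s)) (fun t => φ t s) (Metric.ball t₀ 1))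
    (hbint : IntervalIntegrable bound volume 0 t₀)
    (hdiff : ∀ᵐ s ∂(volume : Measure ℝ), s ∈ Set.uIoc (0:ℝ) t₀ →
      HasDerivAt (fun t => φ t s) (F' s) t₀) :
    HasDerivAt (fun t => ∫ s in (0:ℝ)..t₀, φ t s) (∫ s in (0:ℝ)..t₀, F' s) t₀ := by
  have h := intervalIntegral.hasDerivAt_integral_of_dominated_loc_of_lip
    (F := fun t s => φ t s) (F' := F') (μ := volume) (a := 0) (b := t₀) (x₀ := t₀)
    (bound := bound) (s := Metric.ball t₀ 1) (Metric.ball_mem_nhds t₀ one_pos) (Filter.Eventually.of_forall hmeas) hint hmeas' hlip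
    hbint hdiff
  exact h.2

lemma stepD_core {n : ℕ} (ψ : ℝ → ℝ → Fin n → ℝ) (F' : ℝ → Fin n → ℝ) (t₀ : ℝ) (bound : ℝ → ℝ)
    (hmeas : ∀ t : ℝ, AEStronglyMeasurable (ψ t) (volume.restrict (Set.Ioi t₀)))
    (hint : Integrable (ψ t₀) (volume.restrict (Set.Ioi t₀)))
    (hmeas' : AEStronglyMeasurable F' (volume.restrict (Set.Ioi t₀)))
    (hlip : ∀ᵐ s ∂(volume.restrict (Set.Ioi t₀)),
      LipschitzOnWith (Real.nnabs (bound s)) (fun t => ψ t s) (Metric.ball t₀ 1))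
    (hbint : Integrable bound (volume.restrict (Set.Ioi t₀)))
    (hdiff : ∀ᵐ s ∂(volume.restrict (Set.Ioi t₀)), HasDerivAt (fun t => ψ t s) (F' s) t₀) :
    HasDerivAt (fun t => ∫ s in Set.Ioi t₀, ψ t s) (∫ s in Set.Ioi t₀, F' s) t₀ := by
  have h := _root_.hasDerivAt_integral_of_dominated_loc_of_lip
    (F := fun t s => ψ t s) (F' := F') (μ := volume.restrict (Set.Ioi t₀)) (x₀ := t₀)
    (bound := bound) (s := Metric.ball t₀ 1) (Metric.ball_mem_nhds t₀ one_pos) (Filter.Eventually.of_forall hmeas) hint hmeas' hlip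
    hbint hdiff
  exact h.2
/-- The integral operator T of equation (2.5). -/
noncomputable def Toper {n : ℕ} (α₁ α₂ β γ : ℝ) (x₀ : ℝ → (Fin n → ℝ))
    (f g : ℝ → ℝ → (Fin n → ℝ) → (Fin n → ℝ)) (y : ℝ → (Fin n → ℝ)) (t : ℝ) :
    Fin n → ℝ :=
  x₀ t + (∫ s in (0:ℝ)..t, Real.exp (α₁ * s - α₂ * t) • f t s (y s)) +
    ∫ s in Set.Ioi t, Real.exp (-β * s + γ * t) • g t s (y s)

/-- Under (A1)-(A5) the S-valued solution of the integral equation (1.1) is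
differentiable on `[0,∞)` with bounded derivative. -/
theorem stmt_12 {n : ℕ} (α₁ α₂ β γ : ℝ)
    (hα₁ : α₁ ≠ 0) (hα₂ : 0 ≤ α₂) (hα : α₁ ≤ α₂) (hβ : 0 < β) (hγ : γ ≤ β)
    (x₀ : ℝ → (Fin n → ℝ)) (x₀' : ℝ → (Fin n → ℝ))
    (M₀ M₀' Cf Cg Lf Lg Df Ef Dg Eg : ℝ)
    (hM₀ : ∀ t : ℝ, 0 ≤ t → ‖x₀ t‖ ≤ M₀)
    (hx₀d : ∀ t : ℝ, 0 ≤ t → HasDerivAt x₀ (x₀' t) t)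
    (hx₀d_bd : ∀ t : ℝ, 0 ≤ t → ‖x₀' t‖ ≤ M₀')
    (f g : ℝ → ℝ → (Fin n → ℝ) → (Fin n → ℝ))
    (ft fs gt gs : ℝ → ℝ → (Fin n → ℝ) → (Fin n → ℝ))
    (R : ℝ) (hR : R = M₀ + Cf / |α₁| + Cg / β)
    (hfc : ContinuousOn (fun p : ℝ × ℝ × (Fin n → ℝ) => f p.1 p.2.1 p.2.2)
      {p | 0 ≤ p.2.1 ∧ p.2.1 ≤ p.1 ∧ ‖p.2.2‖ ≤ R})
    (hgc : ContinuousOn (fun p : ℝ × ℝ × (Fin n → ℝ) => g p.1 p.2.1 p.2.2)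
      {p | 0 ≤ p.1 ∧ p.1 ≤ p.2.1 ∧ ‖p.2.2‖ ≤ R})
    (hfb : ∀ t s : ℝ, ∀ x : Fin n → ℝ, 0 ≤ s → s ≤ t → ‖x‖ ≤ R → ‖f t s x‖ ≤ Cf)
    (hgb : ∀ t s : ℝ, ∀ x : Fin n → ℝ, 0 ≤ t → t ≤ s → ‖x‖ ≤ R → ‖g t s x‖ ≤ Cg)
    (hfL : ∀ t s : ℝ, ∀ x y : Fin n → ℝ, 0 ≤ s → s ≤ t → ‖x‖ ≤ R → ‖y‖ ≤ R →
      ‖f t s x - f t s y‖ ≤ Lf * ‖x - y‖)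
    (hgL : ∀ t s : ℝ, ∀ x y : Fin n → ℝ, 0 ≤ t → t ≤ s → ‖x‖ ≤ R → ‖y‖ ≤ R →
      ‖g t s x - g t s y‖ ≤ Lg * ‖x - y‖)
    (hq1 : Lf / |α₁| + Lg / β < 1)
    (hft : ∀ t s : ℝ, ∀ x : Fin n → ℝ, 0 ≤ s → s ≤ t → ‖x‖ ≤ R →
      HasDerivAt (fun τ => f τ s x) (ft t s x) t ∧ ‖ft t s x‖ ≤ Df)
    (hfs : ∀ t s : ℝ, ∀ x : Fin n → ℝ, 0 ≤ s → s ≤ t → ‖x‖ ≤ R →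
      HasDerivAt (fun σ => f t σ x) (fs t s x) s ∧ ‖fs t s x‖ ≤ Ef)
    (hgt : ∀ t s : ℝ, ∀ x : Fin n → ℝ, 0 ≤ t → t ≤ s → ‖x‖ ≤ R →
      HasDerivAt (fun τ => g τ s x) (gt t s x) t ∧ ‖gt t s x‖ ≤ Dg)
    (hgs : ∀ t s : ℝ, ∀ x : Fin n → ℝ, 0 ≤ t → t ≤ s → ‖x‖ ≤ R →
      HasDerivAt (fun σ => g t σ x) (gs t s x) s ∧ ‖gs t s x‖ ≤ Eg)
    (x : ℝ → (Fin n → ℝ)) (hxc : Continuous x)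
    (hxS : ∀ t : ℝ, 0 ≤ t → ‖x t‖ ≤ R)
    (hx : ∀ t : ℝ, 0 ≤ t → x t = Toper α₁ α₂ β γ x₀ f g x t) :
    ∃ x' : ℝ → (Fin n → ℝ),
      (∀ t : ℝ, 0 ≤ t → HasDerivWithinAt x (x' t) (Set.Ici 0) t) ∧
      ∃ C₀ : ℝ, ∀ t : ℝ, 0 ≤ t → ‖x' t‖ ≤ C₀ := by
  classical
  have hDf0 : 0 ≤ Df := le_trans (norm_nonneg _)
    ((hft 0 0 (x 0) le_rfl le_rfl (hxS 0 le_rfl)).2)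
  have hDg0 : 0 ≤ Dg := le_trans (norm_nonneg _)
    ((hgt 0 0 (x 0) le_rfl le_rfl (hxS 0 le_rfl)).2)
  have hCf0 : 0 ≤ Cf := le_trans (norm_nonneg _)
    (hfb 0 0 (x 0) le_rfl le_rfl (hxS 0 le_rfl))
  have hCg0 : 0 ≤ Cg := le_trans (norm_nonneg _)
    (hgb 0 0 (x 0) le_rfl le_rfl (hxS 0 le_rfl))
  obtain ⟨φ, hφeq⟩ : ∃ φ : ℝ → ℝ → (Fin n → ℝ),
      ∀ t s, φ t s = Real.exp (α₁ * s) • f (max t s) s (x s) := ⟨_, fun _ _ => rfl⟩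
  obtain ⟨ψ, hψeq⟩ : ∃ ψ : ℝ → ℝ → (Fin n → ℝ),
      ∀ t s, ψ t s = Real.exp (-β * s) •
        (g (min (max t 0) s) s (x s) + (min t 0) • gt 0 s (x s)) := ⟨_, fun _ _ => rfl⟩
  -- ## basic facts about φ
  have hφcont2 : ContinuousOn (fun p : ℝ × ℝ => φ p.1 p.2) {p : ℝ × ℝ | 0 ≤ p.2} := by
    have hfm : ContinuousOn (fun p : ℝ × ℝ => f (max p.1 p.2) p.2 (x p.2))
        {p : ℝ × ℝ | 0 ≤ p.2} := by
      apply hfc.comp (((continuous_fst.max continuous_snd).prodMk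
        (continuous_snd.prodMk (hxc.comp continuous_snd))).continuousOn)
      intro p hp
      exact ⟨hp, le_max_right _ _, hxS _ hp⟩
    have hbase : ContinuousOn (fun p : ℝ × ℝ => Real.exp (α₁ * p.2) • f (max p.1 p.2) p.2 (x p.2))
        {p : ℝ × ℝ | 0 ≤ p.2} :=
      ((Real.continuous_exp.comp (continuous_const.mul continuous_snd)).continuousOn).smul hfm
    exact hbase.congr (fun p hp => hφeq p.1 p.2)
  have hφcont : ∀ t : ℝ, ContinuousOn (fun s => φ t s) (Set.Ici 0) := by
    intro t
    have hc : Continuous (fun s : ℝ => ((t, s) : ℝ × ℝ)) := continuous_const.prodMk continuous_id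
    exact hφcont2.comp hc.continuousOn (fun s hs => hs)
  have huIccsub : ∀ a b : ℝ, 0 ≤ a → 0 ≤ b → Set.uIcc a b ⊆ Set.Ici (0:ℝ) := by
    intro a b ha hb s hs
    rcases Set.mem_uIcc.1 hs with h | h
    · exact le_trans ha h.1
    · exact le_trans hb h.1
  have hφint : ∀ t a b : ℝ, 0 ≤ a → 0 ≤ b → IntervalIntegrable (φ t) volume a b := by
    intro t a b ha hb
    exact ((hφcont t).mono (huIccsub a b ha hb)).intervalIntegrable
  have hφbd : ∀ t s : ℝ, 0 ≤ s → ‖φ t s‖ ≤ Real.exp (α₁ * s) * Cf := by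
    intro t s hs
    rw [hφeq, norm_smul, Real.norm_eq_abs, Real.abs_exp]
    exact mul_le_mul_of_nonneg_left
      (hfb (max t s) s (x s) hs (le_max_right _ _) (hxS s hs)) (Real.exp_nonneg _)
  have hfLip : ∀ s : ℝ, 0 ≤ s → ∀ a b : ℝ, s ≤ a → s ≤ b →
      ‖f a s (x s) - f b s (x s)‖ ≤ Df * |a - b| := by
    intro s hs a b ha hb
    have := Convex.norm_image_sub_le_of_norm_hasDerivWithin_le
      (f := fun τ => f τ s (x s)) (f' := fun τ => ft τ s (x s)) (s := Set.Ici s) (C := Df)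
      (fun τ hτ => ((hft τ s (x s) hs hτ (hxS s hs)).1).hasDerivWithinAt)
      (fun τ hτ => (hft τ s (x s) hs hτ (hxS s hs)).2) (convex_Ici s) hb ha
    simpa [Real.norm_eq_abs] using this
  have hne : ∀ t₀ : ℝ, ∀ᵐ s : ℝ ∂volume, s ≠ t₀ := by
    intro t₀
    refine MeasureTheory.ae_iff.2 ?_
    simp only [ne_eq, not_not]
    simpa using measure_singleton (t₀ : ℝ)
  -- ## Step A : derivative of t ↦ ∫ s in 0..t₀, φ t s
  have hstepA : ∀ t₀ : ℝ, 0 ≤ t₀ → HasDerivAt (fun t => ∫ s in (0:ℝ)..t₀, φ t s)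
      (∫ s in (0:ℝ)..t₀, Real.exp (α₁*s) • ft t₀ s (x s)) t₀ := by
    intro t₀ ht₀
    have hsub : Set.uIoc (0:ℝ) t₀ ⊆ Set.Ici (0:ℝ) := by
      rw [Set.uIoc_of_le ht₀]; exact fun s hs => hs.1.le
    have hmeas : ∀ t : ℝ, AEStronglyMeasurable (φ t) (volume.restrict (Set.uIoc 0 t₀)) :=
      fun t => ((hφcont t).mono hsub).aestronglyMeasurable measurableSet_uIoc
    have hmeas' : AEStronglyMeasurable (fun s => Real.exp (α₁*s) • ft t₀ s (x s))
        (volume.restrict (Set.uIoc 0 t₀)) := by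
      have h1 : ∀ k : ℕ, AEStronglyMeasurable
          (fun s => ((k:ℝ)+1) • (φ (t₀ + ((k:ℝ)+1)⁻¹) s - φ t₀ s))
          (volume.restrict (Set.uIoc 0 t₀)) :=
        fun k => ((hmeas (t₀ + ((k:ℝ)+1)⁻¹)).sub (hmeas t₀)).const_smul ((k:ℝ)+1)
      apply aestronglyMeasurable_of_tendsto_ae atTop h1
      refine (ae_restrict_iff' measurableSet_uIoc).2 (Filter.Eventually.of_forall fun s hs => ?_)
      rw [Set.uIoc_of_le ht₀] at hs
      have hs0 : 0 ≤ s := hs.1.le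
      have hd := (hft t₀ s (x s) hs0 hs.2 (hxS s hs0)).1
      have hbase := (tendsto_diffquot' hd).const_smul (Real.exp (α₁ * s))
      refine hbase.congr fun k => ?_
      have hk : (0:ℝ) < ((k:ℝ)+1)⁻¹ := by positivity
      have hmax1 : max (t₀ + ((k:ℝ)+1)⁻¹) s = t₀ + ((k:ℝ)+1)⁻¹ := max_eq_left (by linarith [hs.2])
      have hmax2 : max t₀ s = t₀ := max_eq_left hs.2
      simp only [hφeq, hmax1, hmax2, smul_sub]
      simp only [smul_comm (Real.exp (α₁ * s)) (((k:ℝ)+1))]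
    have hlip : ∀ᵐ s ∂(volume : Measure ℝ), s ∈ Set.uIoc (0:ℝ) t₀ →
        LipschitzOnWith (Real.nnabs (Real.exp (α₁*s) * Df)) (fun t => φ t s)
          (Metric.ball t₀ 1) := by
      refine Filter.Eventually.of_forall fun s hs => ?_
      rw [Set.uIoc_of_le ht₀] at hs
      apply LipschitzOnWith.of_dist_le_mul
      intro a ha b hb
      rw [dist_eq_norm, Real.dist_eq, Real.coe_nnabs,
        abs_of_nonneg (by positivity : (0:ℝ) ≤ Real.exp (α₁*s) * Df)]
      have heq2 : φ a s - φ b s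
          = Real.exp (α₁ * s) • (f (max a s) s (x s) - f (max b s) s (x s)) := by
        simp [hφeq, smul_sub]
      rw [heq2, norm_smul, Real.norm_eq_abs, Real.abs_exp]
      calc Real.exp (α₁*s) * ‖f (max a s) s (x s) - f (max b s) s (x s)‖
          ≤ Real.exp (α₁*s) * (Df * |max a s - max b s|) := by
            apply mul_le_mul_of_nonneg_left _ (Real.exp_nonneg _)
            exact hfLip s hs.1.le _ _ (le_max_right _ _) (le_max_right _ _)
        _ ≤ Real.exp (α₁*s) * (Df * |a - b|) := by
            have := abs_max_sub_max_le_abs a b s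
            gcongr
        _ = Real.exp (α₁*s) * Df * |a - b| := by ring
    have hbint : IntervalIntegrable (fun s => Real.exp (α₁*s) * Df) volume 0 t₀ :=
      ((Real.continuous_exp.comp (continuous_const.mul continuous_id)).mul
        continuous_const).intervalIntegrable 0 t₀
    have hdiff : ∀ᵐ s ∂(volume : Measure ℝ), s ∈ Set.uIoc (0:ℝ) t₀ →
        HasDerivAt (fun t => φ t s) (Real.exp (α₁*s) • ft t₀ s (x s)) t₀ := by
      filter_upwards [hne t₀] with s hsne hs
      rw [Set.uIoc_of_le ht₀] at hs
      have hslt : s < t₀ := lt_of_le_of_ne hs.2 hsne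
      have hd := ((hft t₀ s (x s) hs.1.le hs.2 (hxS _ hs.1.le)).1).const_smul (Real.exp (α₁*s))
      apply hd.congr_of_eventuallyEq
      filter_upwards [Metric.ball_mem_nhds t₀ (sub_pos.2 hslt)] with t htb
      have hst : s < t := by
        rw [Metric.mem_ball, Real.dist_eq] at htb
        have h2 := abs_lt.1 htb
        linarith [h2.1]
      simp [hφeq, max_eq_left hst.le]
    exact stepA_core φ (fun s => Real.exp (α₁*s) • ft t₀ s (x s)) t₀
      (fun s => Real.exp (α₁*s) * Df) hmeas (hφint t₀ 0 t₀ le_rfl ht₀) hmeas' hlip hbint hdiff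
  -- ## Step B(f) : boundary term for φ
  have hstepBf : ∀ t₀ : ℝ, 0 ≤ t₀ → HasDerivWithinAt (fun t => ∫ s in t₀..t, φ t s)
      (φ t₀ t₀) (Set.Ici 0) t₀ := by
    intro t₀ ht₀
    apply boundary_hasDerivWithinAt φ t₀ (φ t₀ t₀)
    · intro t htt
      exact hφint t t₀ t ht₀ htt
    · intro ε hε
      have hcw : ContinuousWithinAt (fun p : ℝ × ℝ => φ p.1 p.2)
          {p : ℝ × ℝ | 0 ≤ p.2} (t₀, t₀) := hφcont2 (t₀, t₀) ht₀
      rw [Metric.continuousWithinAt_iff] at hcw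
      obtain ⟨δ, hδ, hδ'⟩ := hcw ε hε
      refine ⟨δ, hδ, fun t s htpos htd hsmem => ?_⟩
      have hs0 : 0 ≤ s := huIccsub t₀ t ht₀ htpos hsmem
      have hsd : |s - t₀| ≤ |t - t₀| := by
        rcases Set.mem_uIcc.1 hsmem with h | h
        · rw [abs_of_nonneg (by linarith [h.1] : (0:ℝ) ≤ s - t₀)]
          calc s - t₀ ≤ t - t₀ := by linarith [h.2]
            _ ≤ |t - t₀| := le_abs_self _
        · rw [abs_of_nonpos (by linarith [h.2] : s - t₀ ≤ 0)]
          calc -(s - t₀) = t₀ - s := by ring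
            _ ≤ t₀ - t := by linarith [h.1]
            _ ≤ |t - t₀| := by
                rw [abs_sub_comm]; exact le_abs_self _
      have hdist : dist ((t,s) : ℝ × ℝ) ((t₀,t₀) : ℝ × ℝ) < δ := by
        rw [Prod.dist_eq]
        apply max_lt
        · rwa [Real.dist_eq]
        · rw [Real.dist_eq]
          exact lt_of_le_of_lt hsd htd
      have := hδ' (show ((t,s) : ℝ × ℝ) ∈ {p : ℝ × ℝ | 0 ≤ p.2} from hs0) hdist
      rw [dist_eq_norm] at this
      exact this.le
  -- ## basic facts about ψ
  have hψpos : ∀ t : ℝ, 0 ≤ t → ∀ s : ℝ, 0 ≤ s →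
      ψ t s = Real.exp (-β * s) • g (min t s) s (x s) := by
    intro t ht s hs
    rw [hψeq, max_eq_left ht, min_eq_right ht]
    simp
  have hgcomp : ∀ c : ℝ, 0 ≤ c → ContinuousOn (fun s => g (min c s) s (x s)) (Set.Ici 0) := by
    intro c hc
    apply hgc.comp (((continuous_const.min continuous_id).prodMk
      (continuous_id.prodMk hxc)).continuousOn)
    intro s hs
    exact ⟨le_min hc hs, min_le_right _ _, hxS s hs⟩
  have hχcont2 : ContinuousOn
      (fun p : ℝ × ℝ => Real.exp (-β * p.2) • g (min p.1 p.2) p.2 (x p.2))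
      {p : ℝ × ℝ | 0 ≤ p.1 ∧ 0 ≤ p.2} := by
    have hgm : ContinuousOn (fun p : ℝ × ℝ => g (min p.1 p.2) p.2 (x p.2))
        {p : ℝ × ℝ | 0 ≤ p.1 ∧ 0 ≤ p.2} := by
      apply hgc.comp (((continuous_fst.min continuous_snd).prodMk
        (continuous_snd.prodMk (hxc.comp continuous_snd))).continuousOn)
      intro p hp
      exact ⟨le_min hp.1 hp.2, min_le_right _ _, hxS _ hp.2⟩
    exact ((Real.continuous_exp.comp (continuous_const.mul continuous_snd)).continuousOn).smul hgm
  have hψcont2 : ContinuousOn (fun p : ℝ × ℝ => ψ p.1 p.2) {p : ℝ × ℝ | 0 ≤ p.1 ∧ 0 ≤ p.2} :=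
    hχcont2.congr (fun p hp => hψpos p.1 hp.1 p.2 hp.2)
  have hψconts : ∀ t : ℝ, 0 ≤ t → ContinuousOn (fun s => ψ t s) (Set.Ici 0) := by
    intro t ht
    have hc : Continuous (fun s : ℝ => ((t, s) : ℝ × ℝ)) := continuous_const.prodMk continuous_id
    exact hψcont2.comp hc.continuousOn (fun s hs => ⟨ht, hs⟩)
  have hψbd : ∀ t : ℝ, 0 ≤ t → ∀ s : ℝ, 0 ≤ s → ‖ψ t s‖ ≤ Cg * Real.exp (-β * s) := by
    intro t ht s hs
    rw [hψpos t ht s hs, norm_smul, Real.norm_eq_abs, Real.abs_exp, mul_comm]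
    exact mul_le_mul_of_nonneg_right
      (hgb (min t s) s (x s) (le_min ht hs) (min_le_right _ _) (hxS s hs)) (Real.exp_nonneg _)
  have hIoisub : ∀ a : ℝ, 0 ≤ a → Set.Ioi a ⊆ Set.Ici (0:ℝ) :=
    fun a ha s hs => le_trans ha (le_of_lt hs)
  have hψint : ∀ t a : ℝ, 0 ≤ t → 0 ≤ a → IntegrableOn (fun s => ψ t s) (Set.Ioi a) volume := by
    intro t a ht ha
    apply Integrable.mono' ((exp_neg_integrableOn_Ioi a hβ).const_mul Cg)
    · exact ((hψconts t ht).mono (hIoisub a ha)).aestronglyMeasurable measurableSet_Ioi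
    · refine (ae_restrict_iff' measurableSet_Ioi).2 (Filter.Eventually.of_forall fun s hs => ?_)
      exact hψbd t ht s (le_trans ha (le_of_lt hs))
  have hψii : ∀ t a b : ℝ, 0 ≤ t → 0 ≤ a → 0 ≤ b →
      IntervalIntegrable (fun s => ψ t s) volume a b := by
    intro t a b ht ha hb
    exact ((hψconts t ht).mono (huIccsub a b ha hb)).intervalIntegrable
  have hgLip : ∀ s : ℝ, 0 ≤ s → ∀ a b : ℝ, a ∈ Set.Icc 0 s → b ∈ Set.Icc 0 s →
      ‖g a s (x s) - g b s (x s)‖ ≤ Dg * |a - b| := by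
    intro s hs a b ha hb
    have := Convex.norm_image_sub_le_of_norm_hasDerivWithin_le
      (f := fun τ => g τ s (x s)) (f' := fun τ => gt τ s (x s)) (s := Set.Icc 0 s) (C := Dg)
      (fun τ hτ => ((hgt τ s (x s) hτ.1 hτ.2 (hxS s hs)).1).hasDerivWithinAt)
      (fun τ hτ => (hgt τ s (x s) hτ.1 hτ.2 (hxS s hs)).2) (convex_Icc 0 s) hb ha
    simpa [Real.norm_eq_abs] using this
  have hgtbd : ∀ t s : ℝ, 0 ≤ t → t ≤ s → ‖gt t s (x s)‖ ≤ Dg :=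
    fun t s ht hts => (hgt t s (x s) ht hts (hxS s (le_trans ht hts))).2
  -- measurability of s ↦ gt c s (x s) on Ioi a
  have hgtmeas : ∀ c a : ℝ, 0 ≤ c → c ≤ a →
      AEStronglyMeasurable (fun s => gt c s (x s)) (volume.restrict (Set.Ioi a)) := by
    intro c a hc hca
    have h1 : ∀ k : ℕ, AEStronglyMeasurable
        (fun s => ((k:ℝ)+1) • (g (min (c + ((k:ℝ)+1)⁻¹) s) s (x s) - g (min c s) s (x s)))
        (volume.restrict (Set.Ioi a)) := by
      intro k
      have hc1 : (0:ℝ) ≤ c + ((k:ℝ)+1)⁻¹ := by positivity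
      have hm1 := ((hgcomp (c + ((k:ℝ)+1)⁻¹) hc1).mono (hIoisub a (le_trans hc hca)))
      have hm2 := ((hgcomp c hc).mono (hIoisub a (le_trans hc hca)))
      exact ((hm1.aestronglyMeasurable measurableSet_Ioi).sub
        (hm2.aestronglyMeasurable measurableSet_Ioi)).const_smul ((k:ℝ)+1)
    apply aestronglyMeasurable_of_tendsto_ae atTop h1
    refine (ae_restrict_iff' measurableSet_Ioi).2 (Filter.Eventually.of_forall fun s hs => ?_)
    have hs0 : 0 ≤ s := le_trans (le_trans hc hca) (le_of_lt hs)
    have hcs : c < s := lt_of_le_of_lt hca hs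
    have hd := (hgt c s (x s) hc (le_of_lt hcs) (hxS s hs0)).1
    have hbase := tendsto_diffquot' hd
    have h0 : Tendsto (fun k : ℕ => ((k:ℝ)+1)⁻¹) atTop (𝓝 0) := by
      simpa [one_div] using tendsto_one_div_add_atTop_nhds_zero_nat (𝕜 := ℝ)
    have hev : ∀ᶠ k : ℕ in atTop, ((k:ℝ)+1)⁻¹ < s - c :=
      h0.eventually_lt_const (by linarith)
    apply hbase.congr'
    filter_upwards [hev] with k hk
    have hm1 : min (c + ((k:ℝ)+1)⁻¹) s = c + ((k:ℝ)+1)⁻¹ := min_eq_left (by linarith)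
    have hm2 : min c s = c := min_eq_left (le_of_lt hcs)
    rw [hm1, hm2]
  -- measurability of ψ t on Ioi t₀ for arbitrary t
  have hψmeas : ∀ t₀ : ℝ, 0 ≤ t₀ → ∀ t : ℝ,
      AEStronglyMeasurable (fun s => ψ t s) (volume.restrict (Set.Ioi t₀)) := by
    intro t₀ ht₀ t
    have hg0 : (0:ℝ) ≤ max t 0 := le_max_right _ _
    have h1 : AEStronglyMeasurable (fun s => Real.exp (-β * s) • g (min (max t 0) s) s (x s))
        (volume.restrict (Set.Ioi t₀)) := by
      have hcont : ContinuousOn (fun s : ℝ => Real.exp (-β * s) • g (min (max t 0) s) s (x s))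
          (Set.Ici 0) :=
        ((Real.continuous_exp.comp (continuous_const.mul continuous_id)).continuousOn).smul
          (hgcomp (max t 0) hg0)
      exact (hcont.mono (hIoisub t₀ ht₀)).aestronglyMeasurable measurableSet_Ioi
    have h2 : AEStronglyMeasurable (fun s => Real.exp (-β * s) • gt 0 s (x s))
        (volume.restrict (Set.Ioi t₀)) := by
      apply AEStronglyMeasurable.fun_smul
      · exact (Real.continuous_exp.comp (continuous_const.mul continuous_id)).aestronglyMeasurable
      · exact hgtmeas 0 t₀ le_rfl ht₀
    have hfe : (fun s => Real.exp (-β * s) • g (min (max t 0) s) s (x s)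
          + (min t 0) • (Real.exp (-β * s) • gt 0 s (x s)))
        =ᵐ[volume.restrict (Set.Ioi t₀)] (fun s => ψ t s) := by
      apply Filter.EventuallyEq.of_eq
      funext s
      rw [hψeq t s, smul_add, smul_comm (Real.exp (-β * s)) (min t 0)]
    exact (h1.add (h2.const_smul (min t 0))).congr hfe
  -- ## Step D : derivative of t ↦ ∫ s in Ioi t₀, ψ t s
  have hstepD : ∀ t₀ : ℝ, 0 ≤ t₀ → HasDerivAt (fun t => ∫ s in Set.Ioi t₀, ψ t s)
      (∫ s in Set.Ioi t₀, Real.exp (-β*s) • gt t₀ s (x s)) t₀ := by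
    intro t₀ ht₀
    have hmeas' : AEStronglyMeasurable (fun s => Real.exp (-β*s) • gt t₀ s (x s))
        (volume.restrict (Set.Ioi t₀)) := by
      apply AEStronglyMeasurable.fun_smul
      · exact (Real.continuous_exp.comp (continuous_const.mul continuous_id)).aestronglyMeasurable
      · exact hgtmeas t₀ t₀ ht₀ le_rfl
    have hlip : ∀ᵐ s ∂(volume.restrict (Set.Ioi t₀)),
        LipschitzOnWith (Real.nnabs (Real.exp (-β*s) * (2*Dg))) (fun t => ψ t s)
          (Metric.ball t₀ 1) := by
      refine (ae_restrict_iff' measurableSet_Ioi).2 (Filter.Eventually.of_forall fun s hs => ?_)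
      have hs0 : 0 ≤ s := le_trans ht₀ (le_of_lt hs)
      apply LipschitzOnWith.of_dist_le_mul
      intro a ha b hb
      rw [dist_eq_norm, Real.dist_eq, Real.coe_nnabs,
        abs_of_nonneg (by positivity : (0:ℝ) ≤ Real.exp (-β*s) * (2*Dg))]
      have heq2 : ψ a s - ψ b s = Real.exp (-β * s) •
          ((g (min (max a 0) s) s (x s) - g (min (max b 0) s) s (x s))
            + (min a 0 - min b 0) • gt 0 s (x s)) := by
        rw [hψeq, hψeq, ← smul_sub]
        congr 1
        rw [sub_smul]
        abel
      rw [heq2, norm_smul, Real.norm_eq_abs, Real.abs_exp]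
      have hca : min (max a 0) s ∈ Set.Icc 0 s :=
        ⟨le_min (le_max_right _ _) hs0, min_le_right _ _⟩
      have hcb : min (max b 0) s ∈ Set.Icc 0 s :=
        ⟨le_min (le_max_right _ _) hs0, min_le_right _ _⟩
      have h1 : ‖g (min (max a 0) s) s (x s) - g (min (max b 0) s) s (x s)‖ ≤ Dg * |a - b| := by
        refine le_trans (hgLip s hs0 _ _ hca hcb) ?_
        have h2 : |min (max a 0) s - min (max b 0) s| ≤ |a - b| :=
          le_trans (abs_min_sub_min_le_abs' (max a 0) (max b 0) s)
            (abs_max_sub_max_le_abs a b 0)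
        gcongr
      have h3 : ‖(min a 0 - min b 0) • gt 0 s (x s)‖ ≤ Dg * |a - b| := by
        rw [norm_smul, Real.norm_eq_abs]
        calc |min a 0 - min b 0| * ‖gt 0 s (x s)‖
            ≤ |a - b| * Dg := by
              apply mul_le_mul (abs_min_sub_min_le_abs' a b 0)
                (hgtbd 0 s le_rfl hs0) (norm_nonneg _) (abs_nonneg _)
          _ = Dg * |a - b| := by ring
      calc Real.exp (-β*s) * ‖(g (min (max a 0) s) s (x s) - g (min (max b 0) s) s (x s))
            + (min a 0 - min b 0) • gt 0 s (x s)‖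
          ≤ Real.exp (-β*s) * (Dg * |a - b| + Dg * |a - b|) := by
            apply mul_le_mul_of_nonneg_left _ (Real.exp_nonneg _)
            exact le_trans (norm_add_le _ _) (add_le_add h1 h3)
        _ = Real.exp (-β*s) * (2*Dg) * |a - b| := by ring
        _ = Real.exp (-β*s) * (2*Dg) * dist a b := by rw [Real.dist_eq]
    have hbint : Integrable (fun s => Real.exp (-β*s) * (2*Dg)) (volume.restrict (Set.Ioi t₀)) :=
      (exp_neg_integrableOn_Ioi t₀ hβ).mul_const (2*Dg)
    have hdiff : ∀ᵐ s ∂(volume.restrict (Set.Ioi t₀)),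
        HasDerivAt (fun t => ψ t s) (Real.exp (-β*s) • gt t₀ s (x s)) t₀ := by
      refine (ae_restrict_iff' measurableSet_Ioi).2 (Filter.Eventually.of_forall fun s hs => ?_)
      have hs0 : 0 ≤ s := le_trans ht₀ (le_of_lt hs)
      rcases eq_or_lt_of_le ht₀ with h0 | hpos
      · -- t₀ = 0
        subst h0
        have hsp : (0:ℝ) < s := hs
        have hd0 := ((hgt 0 s (x s) le_rfl (le_of_lt hsp) (hxS s hs0)).1).const_smul
          (Real.exp (-β*s))
        have hψ0 : ψ 0 s = Real.exp (-β*s) • g 0 s (x s) := by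
          rw [hψeq]
          simp [min_eq_left hsp.le]
        have hright : HasDerivWithinAt (fun t => ψ t s)
            (Real.exp (-β*s) • gt 0 s (x s)) (Set.Ici 0) 0 := by
          apply HasDerivWithinAt.congr_of_eventuallyEq hd0.hasDerivWithinAt
          · have hmem : Set.Ici (0:ℝ) ∩ Set.Iio s ∈ 𝓝[Set.Ici (0:ℝ)] 0 :=
              inter_mem_nhdsWithin _ (Iio_mem_nhds hsp)
            filter_upwards [hmem] with t htm
            rw [hψeq, max_eq_left htm.1, min_eq_left (le_of_lt htm.2), min_eq_right htm.1]
            simp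
          · exact hψ0
        have hleft : HasDerivWithinAt (fun t => ψ t s)
            (Real.exp (-β*s) • gt 0 s (x s)) (Set.Iic 0) 0 := by
          have hlin : HasDerivAt (fun t : ℝ => Real.exp (-β*s) • g 0 s (x s)
              + t • (Real.exp (-β*s) • gt 0 s (x s))) (Real.exp (-β*s) • gt 0 s (x s)) 0 := by
            have h1 : HasDerivAt (fun t : ℝ => t • (Real.exp (-β*s) • gt 0 s (x s)))
                (Real.exp (-β*s) • gt 0 s (x s)) 0 := by
              simpa using (hasDerivAt_id (0:ℝ)).smul_const (Real.exp (-β*s) • gt 0 s (x s))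
            simpa using h1.const_add (Real.exp (-β*s) • g 0 s (x s))
          apply hlin.hasDerivWithinAt.congr
          · intro t htm
            rw [hψeq, max_eq_right htm, min_eq_left hsp.le, min_eq_left htm,
              smul_add, smul_comm (Real.exp (-β*s)) t]
          · rw [hψ0]
            simp
        have hu := hleft.union hright
        rw [Set.Iic_union_Ici] at hu
        exact hasDerivWithinAt_univ.1 hu
      · -- 0 < t₀
        have hd := ((hgt t₀ s (x s) ht₀ (le_of_lt hs) (hxS s hs0)).1).const_smul
          (Real.exp (-β*s))
        apply hd.congr_of_eventuallyEq
        have hball : Metric.ball t₀ (min t₀ (s - t₀)) ∈ 𝓝 t₀ :=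
          Metric.ball_mem_nhds t₀ (lt_min hpos (by
            have hs' : t₀ < s := hs
            linarith))
        filter_upwards [hball] with t htb
        rw [Metric.mem_ball, Real.dist_eq] at htb
        have h1 := abs_lt.1 htb
        have hs' : t₀ < s := hs
        have hts : t < s := by
          have h2 := lt_of_lt_of_le htb (min_le_right t₀ (s - t₀))
          have h3 := abs_lt.1 h2
          linarith [h3.2]
        have ht0 : 0 < t := by
          have h2 := lt_of_lt_of_le htb (min_le_left t₀ (s - t₀))
          have h3 := abs_lt.1 h2
          linarith [h3.1]
        rw [hψeq, max_eq_left (le_of_lt ht0), min_eq_left (le_of_lt hts),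
          min_eq_right (le_of_lt ht0)]
        simp
    exact stepD_core ψ (fun s => Real.exp (-β*s) • gt t₀ s (x s)) t₀
      (fun s => Real.exp (-β*s) * (2*Dg)) (hψmeas t₀ ht₀) (hψint t₀ t₀ ht₀ ht₀) hmeas' hlip
      hbint hdiff
  -- ## Step E : boundary term for ψ
  have habs_uIcc : ∀ t₀ t s : ℝ, s ∈ Set.uIcc t₀ t → |s - t₀| ≤ |t - t₀| := by
    intro t₀ t s hsmem
    rcases Set.mem_uIcc.1 hsmem with h | h
    · rw [abs_of_nonneg (by linarith [h.1] : (0:ℝ) ≤ s - t₀)]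
      calc s - t₀ ≤ t - t₀ := by linarith [h.2]
        _ ≤ |t - t₀| := le_abs_self _
    · rw [abs_of_nonpos (by linarith [h.2] : s - t₀ ≤ 0)]
      calc -(s - t₀) = t₀ - s := by ring
        _ ≤ t₀ - t := by linarith [h.1]
        _ ≤ |t - t₀| := by rw [abs_sub_comm]; exact le_abs_self _
  have hstepBg : ∀ t₀ : ℝ, 0 ≤ t₀ → HasDerivWithinAt (fun t => ∫ s in t₀..t, ψ t s)
      (ψ t₀ t₀) (Set.Ici 0) t₀ := by
    intro t₀ ht₀
    apply boundary_hasDerivWithinAt ψ t₀ (ψ t₀ t₀)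
    · intro t htt
      exact hψii t t₀ t htt ht₀ htt
    · intro ε hε
      have hcw : ContinuousWithinAt (fun p : ℝ × ℝ => ψ p.1 p.2)
          {p : ℝ × ℝ | 0 ≤ p.1 ∧ 0 ≤ p.2} (t₀, t₀) := hψcont2 (t₀, t₀) ⟨ht₀, ht₀⟩
      rw [Metric.continuousWithinAt_iff] at hcw
      obtain ⟨δ, hδ, hδ'⟩ := hcw ε hε
      refine ⟨δ, hδ, fun t s htpos htd hsmem => ?_⟩
      have hs0 : 0 ≤ s := huIccsub t₀ t ht₀ htpos hsmem
      have hdist : dist ((t,s) : ℝ × ℝ) ((t₀,t₀) : ℝ × ℝ) < δ := by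
        rw [Prod.dist_eq]
        apply max_lt
        · rwa [Real.dist_eq]
        · rw [Real.dist_eq]
          exact lt_of_le_of_lt (habs_uIcc t₀ t s hsmem) htd
      have := hδ' (show ((t,s) : ℝ × ℝ) ∈ {p : ℝ × ℝ | 0 ≤ p.1 ∧ 0 ≤ p.2} from ⟨htpos, hs0⟩) hdist
      rw [dist_eq_norm] at this
      exact this.le
  -- ## splitting identity for the Ioi integral
  have hsplit : ∀ t₀ t : ℝ, 0 ≤ t₀ → 0 ≤ t →
      (∫ s in Set.Ioi t, ψ t s) = (∫ s in Set.Ioi t₀, ψ t s) - ∫ s in t₀..t, ψ t s := by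
    intro t₀ t ht₀ ht
    rcases le_total t₀ t with h | h
    · have hu := MeasureTheory.setIntegral_union (f := fun s => ψ t s) (μ := volume)
        (Set.Ioc_disjoint_Ioi (le_refl t)) measurableSet_Ioi
        ((hψint t t₀ ht ht₀).mono_set Set.Ioc_subset_Ioi_self)
        (hψint t t ht ht)
      have h2 : (∫ s in Set.Ioi t₀, ψ t s)
          = (∫ s in Set.Ioc t₀ t, ψ t s) + ∫ s in Set.Ioi t, ψ t s := by
        rw [← Set.Ioc_union_Ioi_eq_Ioi h]
        exact hu
      rw [h2, intervalIntegral.integral_of_le h]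
      abel
    · have hu := MeasureTheory.setIntegral_union (f := fun s => ψ t s) (μ := volume)
        (Set.Ioc_disjoint_Ioi (le_refl t₀)) measurableSet_Ioi
        ((hψint t t ht ht).mono_set Set.Ioc_subset_Ioi_self)
        (hψint t t₀ ht ht₀)
      have h2 : (∫ s in Set.Ioi t, ψ t s)
          = (∫ s in Set.Ioc t t₀, ψ t s) + ∫ s in Set.Ioi t₀, ψ t s := by
        rw [← Set.Ioc_union_Ioi_eq_Ioi h]
        exact hu
      rw [h2, intervalIntegral.integral_symm t t₀, intervalIntegral.integral_of_le h]
      abel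
  -- ## the constant
  obtain ⟨q, hq⟩ : ∃ q : ℝ, q = M₀' + ((Df * (1/|α₁|) + Cf) + α₂ * (Cf * (1/|α₁|)))
      + ((Dg * (1/β) + Cg) + |γ| * (Cg * (1/β))) := ⟨_, rfl⟩
  -- ## the key pointwise statement
  have hkey : ∀ t₀ : ℝ, 0 ≤ t₀ → ∃ d : Fin n → ℝ,
      HasDerivWithinAt x d (Set.Ici 0) t₀ ∧ ‖d‖ ≤ q := by
    intro t₀ ht₀
    have hexp1 : HasDerivAt (fun t : ℝ => Real.exp (-α₂ * t))
        (Real.exp (-α₂ * t₀) * (-α₂ * 1)) t₀ := ((hasDerivAt_id t₀).const_mul (-α₂)).exp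
    have hexp2 : HasDerivAt (fun t : ℝ => Real.exp (γ * t))
        (Real.exp (γ * t₀) * (γ * 1)) t₀ := ((hasDerivAt_id t₀).const_mul γ).exp
    have hAB := ((hstepA t₀ ht₀).hasDerivWithinAt).add (hstepBf t₀ ht₀)
    have hP := (hexp1.hasDerivWithinAt).smul hAB
    have hDG := ((hstepD t₀ ht₀).hasDerivWithinAt).sub (hstepBg t₀ ht₀)
    have hQ := (hexp2.hasDerivWithinAt).smul hDG
    have hXX := (((hx₀d t₀ ht₀).hasDerivWithinAt).add hP).add hQ
    have heqq : ∀ t ∈ Set.Ici (0:ℝ), x t = x₀ t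
        + Real.exp (-α₂ * t) • ((∫ s in (0:ℝ)..t₀, φ t s) + ∫ s in t₀..t, φ t s)
        + Real.exp (γ * t) • ((∫ s in Set.Ioi t₀, ψ t s) - ∫ s in t₀..t, ψ t s) := by
      intro t ht
      have hmid : (∫ s in (0:ℝ)..t, Real.exp (α₁ * s - α₂ * t) • f t s (x s))
          = Real.exp (-α₂ * t) • ((∫ s in (0:ℝ)..t₀, φ t s) + ∫ s in t₀..t, φ t s) := by
        rw [intervalIntegral.integral_add_adjacent_intervals (hφint t 0 t₀ le_rfl ht₀)
          (hφint t t₀ t ht₀ ht), ← intervalIntegral.integral_smul]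
        apply intervalIntegral.integral_congr
        intro s hs
        rw [Set.uIcc_of_le ht] at hs
        show Real.exp (α₁ * s - α₂ * t) • f t s (x s) = Real.exp (-α₂ * t) • φ t s
        rw [hφeq, max_eq_left hs.2, smul_smul, ← Real.exp_add,
          show -α₂ * t + α₁ * s = α₁ * s - α₂ * t from by ring]
      have hlast : (∫ s in Set.Ioi t, Real.exp (-β * s + γ * t) • g t s (x s))
          = Real.exp (γ * t) • ((∫ s in Set.Ioi t₀, ψ t s) - ∫ s in t₀..t, ψ t s) := by
        rw [← hsplit t₀ t ht₀ ht, ← MeasureTheory.integral_smul]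
        apply MeasureTheory.setIntegral_congr_fun measurableSet_Ioi
        intro s hs
        have hts : t < s := hs
        show Real.exp (-β * s + γ * t) • g t s (x s) = Real.exp (γ * t) • ψ t s
        rw [hψpos t ht s (le_trans ht (le_of_lt hts)), min_eq_left (le_of_lt hts),
          smul_smul, ← Real.exp_add, show γ * t + -β * s = -β * s + γ * t from by ring]
      rw [hx t ht]
      unfold Toper
      rw [hmid, hlast]
    refine ⟨_, hXX.congr heqq (heqq t₀ (Set.mem_Ici.2 ht₀)), ?_⟩
    -- ### the norm bound
    have hIexp : (∫ s in (0:ℝ)..t₀, Real.exp (α₁ * s)) = (Real.exp (α₁ * t₀) - 1)/α₁ := by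
      have hder : ∀ u ∈ Set.uIcc (0:ℝ) t₀,
          HasDerivAt (fun v => Real.exp (α₁ * v)/α₁) (Real.exp (α₁ * u)) u := by
        intro u _
        have h1 : HasDerivAt (fun v : ℝ => α₁ * v) (α₁ * 1) u := (hasDerivAt_id u).const_mul α₁
        have h2 := (h1.exp).div_const α₁
        refine h2.congr_deriv ?_
        field_simp
      have hii : IntervalIntegrable (fun u => Real.exp (α₁ * u)) volume 0 t₀ :=
        (Real.continuous_exp.comp (continuous_const.mul continuous_id)).intervalIntegrable 0 t₀
      rw [intervalIntegral.integral_eq_sub_of_hasDerivAt hder hii]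
      rw [mul_zero, Real.exp_zero]
      ring
    have hK := expint_bound α₁ α₂ t₀ hα₁ hα₂ hα ht₀
    have he12 : Real.exp (-α₂ * t₀) * Real.exp (α₁ * t₀) ≤ 1 := by
      rw [← Real.exp_add]
      exact Real.exp_le_one_iff.2 (by nlinarith)
    have he34 : Real.exp (γ * t₀) * Real.exp (-β * t₀) ≤ 1 := by
      rw [← Real.exp_add]
      exact Real.exp_le_one_iff.2 (by nlinarith)
    have hb1 : ‖∫ s in (0:ℝ)..t₀, Real.exp (α₁ * s) • ft t₀ s (x s)‖
        ≤ Df * ((Real.exp (α₁ * t₀) - 1)/α₁) := by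
      have hbd : ∀ᵐ u ∂volume.restrict (Set.uIoc (0:ℝ) t₀),
          ‖Real.exp (α₁ * u) • ft t₀ u (x u)‖ ≤ Real.exp (α₁ * u) * Df := by
        refine (ae_restrict_iff' measurableSet_uIoc).2 (Filter.Eventually.of_forall fun u hu => ?_)
        rw [Set.uIoc_of_le ht₀] at hu
        rw [norm_smul, Real.norm_eq_abs, Real.abs_exp]
        exact mul_le_mul_of_nonneg_left
          ((hft t₀ u (x u) hu.1.le hu.2 (hxS u hu.1.le)).2) (Real.exp_nonneg _)
      have hgint : IntervalIntegrable (fun u => Real.exp (α₁ * u) * Df) volume 0 t₀ :=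
        ((Real.continuous_exp.comp (continuous_const.mul continuous_id)).mul
          continuous_const).intervalIntegrable 0 t₀
      have h := intervalIntegral.norm_integral_le_abs_of_norm_le hbd hgint
      rw [intervalIntegral.integral_mul_const, hIexp,
        abs_of_nonneg (mul_nonneg hK.1 hDf0), mul_comm] at h
      exact h
    have hb2 : ‖∫ s in (0:ℝ)..t₀, φ t₀ s‖ ≤ Cf * ((Real.exp (α₁ * t₀) - 1)/α₁) := by
      have hbd : ∀ᵐ u ∂volume.restrict (Set.uIoc (0:ℝ) t₀),
          ‖φ t₀ u‖ ≤ Real.exp (α₁ * u) * Cf := by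
        refine (ae_restrict_iff' measurableSet_uIoc).2 (Filter.Eventually.of_forall fun u hu => ?_)
        rw [Set.uIoc_of_le ht₀] at hu
        exact hφbd t₀ u hu.1.le
      have hgint : IntervalIntegrable (fun u => Real.exp (α₁ * u) * Cf) volume 0 t₀ :=
        ((Real.continuous_exp.comp (continuous_const.mul continuous_id)).mul
          continuous_const).intervalIntegrable 0 t₀
      have h := intervalIntegral.norm_integral_le_abs_of_norm_le hbd hgint
      rw [intervalIntegral.integral_mul_const, hIexp,
        abs_of_nonneg (mul_nonneg hK.1 hCf0), mul_comm] at h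
      exact h
    have hb3 : ‖φ t₀ t₀‖ ≤ Real.exp (α₁ * t₀) * Cf := hφbd t₀ t₀ ht₀
    have hIexp2 := integral_exp_scaled β t₀ hβ
    have hb4 : ‖∫ s in Set.Ioi t₀, Real.exp (-β * s) • gt t₀ s (x s)‖
        ≤ Dg * (Real.exp (-β * t₀)/β) := by
      have hbd : ∀ᵐ u ∂volume.restrict (Set.Ioi t₀),
          ‖Real.exp (-β * u) • gt t₀ u (x u)‖ ≤ Dg * Real.exp (-β * u) := by
        refine (ae_restrict_iff' measurableSet_Ioi).2 (Filter.Eventually.of_forall fun u hu => ?_)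
        rw [norm_smul, Real.norm_eq_abs, Real.abs_exp, mul_comm]
        exact mul_le_mul_of_nonneg_right (hgtbd t₀ u ht₀ (le_of_lt hu)) (Real.exp_nonneg _)
      have h := MeasureTheory.norm_integral_le_of_norm_le
        ((exp_neg_integrableOn_Ioi t₀ hβ).const_mul Dg) hbd
      rwa [MeasureTheory.integral_const_mul, hIexp2] at h
    have hb5 : ‖∫ s in Set.Ioi t₀, ψ t₀ s‖ ≤ Cg * (Real.exp (-β * t₀)/β) := by
      have hbd : ∀ᵐ u ∂volume.restrict (Set.Ioi t₀), ‖ψ t₀ u‖ ≤ Cg * Real.exp (-β * u) := by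
        refine (ae_restrict_iff' measurableSet_Ioi).2 (Filter.Eventually.of_forall fun u hu => ?_)
        exact hψbd t₀ ht₀ u (le_trans ht₀ (le_of_lt hu))
      have h := MeasureTheory.norm_integral_le_of_norm_le
        ((exp_neg_integrableOn_Ioi t₀ hβ).const_mul Cg) hbd
      rwa [MeasureTheory.integral_const_mul, hIexp2] at h
    have hb6 : ‖ψ t₀ t₀‖ ≤ Cg * Real.exp (-β * t₀) := hψbd t₀ ht₀ t₀ ht₀
    have hI3 : (∫ s in t₀..t₀, φ t₀ s) = 0 := intervalIntegral.integral_same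
    have hI6 : (∫ s in t₀..t₀, ψ t₀ s) = 0 := intervalIntegral.integral_same
    have hdP : ‖Real.exp (-α₂ * t₀) • ((∫ s in (0:ℝ)..t₀, Real.exp (α₁ * s) • ft t₀ s (x s))
          + φ t₀ t₀)
        + (Real.exp (-α₂ * t₀) * (-α₂ * 1)) • ((∫ s in (0:ℝ)..t₀, φ t₀ s)
          + ∫ s in t₀..t₀, φ t₀ s)‖
        ≤ (Df * (1/|α₁|) + Cf) + α₂ * (Cf * (1/|α₁|)) := by
      have h1 : ‖Real.exp (-α₂ * t₀) • ((∫ s in (0:ℝ)..t₀, Real.exp (α₁ * s) • ft t₀ s (x s))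
          + φ t₀ t₀)‖ ≤ Df * (1/|α₁|) + Cf := by
        rw [norm_smul, Real.norm_eq_abs, Real.abs_exp]
        calc Real.exp (-α₂ * t₀) * ‖(∫ s in (0:ℝ)..t₀, Real.exp (α₁ * s) • ft t₀ s (x s))
              + φ t₀ t₀‖
            ≤ Real.exp (-α₂ * t₀) * (Df * ((Real.exp (α₁ * t₀) - 1)/α₁)
              + Real.exp (α₁ * t₀) * Cf) := by
              apply mul_le_mul_of_nonneg_left _ (Real.exp_nonneg _)
              exact le_trans (norm_add_le _ _) (add_le_add hb1 hb3)
          _ = Df * (Real.exp (-α₂ * t₀) * ((Real.exp (α₁ * t₀) - 1)/α₁))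
              + (Real.exp (-α₂ * t₀) * Real.exp (α₁ * t₀)) * Cf := by ring
          _ ≤ Df * (1/|α₁|) + 1 * Cf :=
              add_le_add (mul_le_mul_of_nonneg_left hK.2 hDf0)
                (mul_le_mul_of_nonneg_right he12 hCf0)
          _ = Df * (1/|α₁|) + Cf := by ring
      have h2 : ‖(Real.exp (-α₂ * t₀) * (-α₂ * 1)) • ((∫ s in (0:ℝ)..t₀, φ t₀ s)
          + ∫ s in t₀..t₀, φ t₀ s)‖ ≤ α₂ * (Cf * (1/|α₁|)) := by
        rw [hI3, add_zero, norm_smul, Real.norm_eq_abs]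
        have habs : |Real.exp (-α₂ * t₀) * (-α₂ * 1)| = Real.exp (-α₂ * t₀) * α₂ := by
          rw [abs_mul, Real.abs_exp, abs_of_nonpos (by linarith : -α₂ * 1 ≤ 0)]
          ring
        rw [habs]
        calc Real.exp (-α₂ * t₀) * α₂ * ‖∫ s in (0:ℝ)..t₀, φ t₀ s‖
            ≤ Real.exp (-α₂ * t₀) * α₂ * (Cf * ((Real.exp (α₁ * t₀) - 1)/α₁)) := by
              apply mul_le_mul_of_nonneg_left hb2 (by positivity)
          _ = α₂ * (Cf * (Real.exp (-α₂ * t₀) * ((Real.exp (α₁ * t₀) - 1)/α₁))) := by ring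
          _ ≤ α₂ * (Cf * (1/|α₁|)) :=
              mul_le_mul_of_nonneg_left (mul_le_mul_of_nonneg_left hK.2 hCf0) hα₂
      exact le_trans (norm_add_le _ _) (add_le_add h1 h2)
    have hdQ : ‖Real.exp (γ * t₀) • ((∫ s in Set.Ioi t₀, Real.exp (-β * s) • gt t₀ s (x s))
          - ψ t₀ t₀)
        + (Real.exp (γ * t₀) * (γ * 1)) • ((∫ s in Set.Ioi t₀, ψ t₀ s)
          - ∫ s in t₀..t₀, ψ t₀ s)‖
        ≤ (Dg * (1/β) + Cg) + |γ| * (Cg * (1/β)) := by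
      have h3 : ‖Real.exp (γ * t₀) • ((∫ s in Set.Ioi t₀, Real.exp (-β * s) • gt t₀ s (x s))
          - ψ t₀ t₀)‖ ≤ Dg * (1/β) + Cg := by
        rw [norm_smul, Real.norm_eq_abs, Real.abs_exp]
        calc Real.exp (γ * t₀) * ‖(∫ s in Set.Ioi t₀, Real.exp (-β * s) • gt t₀ s (x s))
              - ψ t₀ t₀‖
            ≤ Real.exp (γ * t₀) * (Dg * (Real.exp (-β * t₀)/β) + Cg * Real.exp (-β * t₀)) := by
              apply mul_le_mul_of_nonneg_left _ (Real.exp_nonneg _)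
              exact le_trans (norm_sub_le _ _) (add_le_add hb4 hb6)
          _ = Dg * ((Real.exp (γ * t₀) * Real.exp (-β * t₀))/β)
              + Cg * (Real.exp (γ * t₀) * Real.exp (-β * t₀)) := by ring
          _ ≤ Dg * (1/β) + Cg * 1 := by
              apply add_le_add
              · apply mul_le_mul_of_nonneg_left _ hDg0
                gcongr
              · exact mul_le_mul_of_nonneg_left he34 hCg0
          _ = Dg * (1/β) + Cg := by ring
      have h4 : ‖(Real.exp (γ * t₀) * (γ * 1)) • ((∫ s in Set.Ioi t₀, ψ t₀ s)
          - ∫ s in t₀..t₀, ψ t₀ s)‖ ≤ |γ| * (Cg * (1/β)) := by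
        rw [hI6, sub_zero, norm_smul, Real.norm_eq_abs]
        have habs : |Real.exp (γ * t₀) * (γ * 1)| = Real.exp (γ * t₀) * |γ| := by
          rw [abs_mul, Real.abs_exp, mul_one]
        rw [habs]
        calc Real.exp (γ * t₀) * |γ| * ‖∫ s in Set.Ioi t₀, ψ t₀ s‖
            ≤ Real.exp (γ * t₀) * |γ| * (Cg * (Real.exp (-β * t₀)/β)) := by
              apply mul_le_mul_of_nonneg_left hb5 (by positivity)
          _ = |γ| * (Cg * ((Real.exp (γ * t₀) * Real.exp (-β * t₀))/β)) := by ring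
          _ ≤ |γ| * (Cg * (1/β)) := by
              apply mul_le_mul_of_nonneg_left _ (abs_nonneg γ)
              apply mul_le_mul_of_nonneg_left _ hCg0
              gcongr
      exact le_trans (norm_add_le _ _) (add_le_add h3 h4)
    rw [hq]
    calc ‖x₀' t₀
        + (Real.exp (-α₂ * t₀) • ((∫ s in (0:ℝ)..t₀, Real.exp (α₁ * s) • ft t₀ s (x s))
            + φ t₀ t₀)
          + (Real.exp (-α₂ * t₀) * (-α₂ * 1)) • ((∫ s in (0:ℝ)..t₀, φ t₀ s)
            + ∫ s in t₀..t₀, φ t₀ s))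
        + (Real.exp (γ * t₀) • ((∫ s in Set.Ioi t₀, Real.exp (-β * s) • gt t₀ s (x s))
            - ψ t₀ t₀)
          + (Real.exp (γ * t₀) * (γ * 1)) • ((∫ s in Set.Ioi t₀, ψ t₀ s)
            - ∫ s in t₀..t₀, ψ t₀ s))‖
        ≤ ‖x₀' t₀‖
          + ‖Real.exp (-α₂ * t₀) • ((∫ s in (0:ℝ)..t₀, Real.exp (α₁ * s) • ft t₀ s (x s))
              + φ t₀ t₀)
            + (Real.exp (-α₂ * t₀) * (-α₂ * 1)) • ((∫ s in (0:ℝ)..t₀, φ t₀ s)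
              + ∫ s in t₀..t₀, φ t₀ s)‖
          + ‖Real.exp (γ * t₀) • ((∫ s in Set.Ioi t₀, Real.exp (-β * s) • gt t₀ s (x s))
              - ψ t₀ t₀)
            + (Real.exp (γ * t₀) * (γ * 1)) • ((∫ s in Set.Ioi t₀, ψ t₀ s)
              - ∫ s in t₀..t₀, ψ t₀ s)‖ := norm_add₃_le
      _ ≤ M₀' + ((Df * (1/|α₁|) + Cf) + α₂ * (Cf * (1/|α₁|)))
          + ((Dg * (1/β) + Cg) + |γ| * (Cg * (1/β))) :=
        add_le_add (add_le_add (hx₀d_bd t₀ ht₀) hdP) hdQ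
  refine ⟨fun t => if h : 0 ≤ t then Classical.choose (hkey t h) else 0, ?_, q, ?_⟩
  · intro t ht
    simp only [dif_pos ht]
    exact (Classical.choose_spec (hkey t ht)).1
  · intro t ht
    simp only [dif_pos ht]
    exact (Classical.choose_spec (hkey t ht)).2
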